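/- Let ε, E, ω, α, λ be real numbers with λ ≠ 0, ε ≠ 0, ε ≠ −1/2 and ε ≠ −1, and let Φ be a real-analytic function on a neighborhood of 0 satisfying the generalized Calogero–Yukawa reduced equation Φ''(x) + (2ε/x)·Φ'(x) + [2E − ω²x² − (2√2·α/x)·exp(−√2·x/λ)]·Φ(x) = 0 for all x in some interval (0, δ) with δ > 0. Writing C_k = Φ^{(k)}(0)/k! for the Taylor coefficients of Φ at 0, the third coefficient satisfies C_3 = (√2·α·C_0/(3(ε+1)))·[ 2α²/(ε(2ε+1)) − (3ε+1)(E + 2α/λ)/(ε(2ε+1)) + 1/λ² ]. -/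

import Mathlib

open Filter Set Real Topology in
set_option maxHeartbeats 1000000 in
/-- Third Taylor coefficient of an analytic solution of the generalized
Calogero–Yukawa reduced equation, in terms of the zero mode `C₀ = Φ(0)`:
`C₃ = (√2·α·C₀/(3(ε+1)))·[2α²/(ε(2ε+1)) − (3ε+1)(E+2α/λ)/(ε(2ε+1)) + 1/λ²]`. -/
theorem calogero_yukawa_third_coefficient
    (ε E ω α lam : ℝ) (hlam : lam ≠ 0) (hε : ε ≠ 0)
    (hε' : ε ≠ -(1/2)) (hε'' : ε ≠ -1)
    (Φ : ℝ → ℝ) (hA : AnalyticAt ℝ Φ 0)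
    (δ : ℝ) (hδ : 0 < δ)
    (hODE : ∀ x ∈ Set.Ioo (0 : ℝ) δ,
      deriv (deriv Φ) x + (2 * ε / x) * deriv Φ x +
        (2 * E - ω ^ 2 * x ^ 2
          - (2 * Real.sqrt 2 * α / x) * Real.exp (-Real.sqrt 2 * x / lam)) * Φ x = 0) :
    iteratedDeriv 3 Φ 0 / (Nat.factorial 3 : ℝ)
      = (Real.sqrt 2 * α * Φ 0 / (3 * (ε + 1)))
        * (2 * α ^ 2 / (ε * (2 * ε + 1))
            - (3 * ε + 1) * (E + 2 * α / lam) / (ε * (2 * ε + 1))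
            + 1 / lam ^ 2) := by
  set s := Real.sqrt 2 with hsdef
  have hs2 : s ^ 2 = 2 := Real.sq_sqrt (by norm_num)
  obtain ⟨U, hU0, hUo, hUa⟩ : ∃ U : Set ℝ, 0 ∈ U ∧ IsOpen U ∧ AnalyticOnNhd ℝ Φ U := by
    obtain ⟨t, ht, hta⟩ := hA.eventually_analyticAt.exists_mem
    exact ⟨interior t, mem_interior_iff_mem_nhds.2 ht, isOpen_interior,
      fun y hy => hta y (interior_subset hy)⟩
  have hD1 : AnalyticOnNhd ℝ (deriv Φ) U := hUa.deriv
  have hD2 : AnalyticOnNhd ℝ (deriv (deriv Φ)) U := hD1.deriv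
  have hD3 : AnalyticOnNhd ℝ (deriv (deriv (deriv Φ))) U := hD2.deriv
  have hD4 : AnalyticOnNhd ℝ (deriv (deriv (deriv (deriv Φ)))) U := hD3.deriv
  set e : ℝ → ℝ := fun x => Real.exp (-s * x / lam) with he
  have hexp : ∀ x : ℝ, HasDerivAt e (-s / lam * e x) x := by
    intro x
    have h1 : HasDerivAt (fun x : ℝ => -s * x / lam) (-s / lam) x := by
      simpa using ((hasDerivAt_id x).const_mul (-s)).div_const lam
    have h2 := h1.exp
    rw [he]
    convert h2 using 1
    ring
  have heA : AnalyticAt ℝ e 0 := by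
    apply analyticAt_rexp.comp
    exact ((analyticAt_const.mul analyticAt_id).div analyticAt_const hlam)
  set g : ℝ → ℝ := fun x => x * deriv (deriv Φ) x + 2 * ε * deriv Φ x
      + (2 * E * x - ω ^ 2 * x ^ 3 - 2 * s * α * e x) * Φ x with hgdef
  set g1 : ℝ → ℝ := fun x => deriv (deriv Φ) x + x * deriv (deriv (deriv Φ)) x
      + 2 * ε * deriv (deriv Φ) x
      + (2 * E - 3 * ω ^ 2 * x ^ 2 + (s / lam) * 2 * s * α * e x) * Φ x
      + (2 * E * x - ω ^ 2 * x ^ 3 - 2 * s * α * e x) * deriv Φ x with hg1def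
  set g2 : ℝ → ℝ := fun x => 2 * deriv (deriv (deriv Φ)) x
      + x * deriv (deriv (deriv (deriv Φ))) x
      + 2 * ε * deriv (deriv (deriv Φ)) x
      + (-6 * ω ^ 2 * x - (s / lam) ^ 2 * 2 * s * α * e x) * Φ x
      + 2 * (2 * E - 3 * ω ^ 2 * x ^ 2 + (s / lam) * 2 * s * α * e x) * deriv Φ x
      + (2 * E * x - ω ^ 2 * x ^ 3 - 2 * s * α * e x) * deriv (deriv Φ) x with hg2def
  -- g vanishes on (0, δ)
  have hgIoo : ∀ x ∈ Set.Ioo (0 : ℝ) δ, g x = 0 := by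
    intro x hx
    have hx0 : x ≠ 0 := ne_of_gt hx.1
    have h := hODE x hx
    have : g x = x * (deriv (deriv Φ) x + (2 * ε / x) * deriv Φ x +
        (2 * E - ω ^ 2 * x ^ 2 - (2 * s * α / x) * e x) * Φ x) := by
      rw [hgdef]
      field_simp
    rw [this, h, mul_zero]
  -- g analytic at 0
  have hgA : AnalyticAt ℝ g 0 := by
    apply AnalyticAt.add
    apply AnalyticAt.add
    · exact analyticAt_id.mul (hD2 0 hU0)
    · exact analyticAt_const.mul (hD1 0 hU0)
    · exact (((analyticAt_const.mul analyticAt_id).sub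
        (analyticAt_const.mul (analyticAt_id.pow 3))).sub
        (analyticAt_const.mul heA)).mul (hUa 0 hU0)
  -- g vanishes near 0
  have heq : ∀ᶠ x in 𝓝 (0 : ℝ), g x = 0 := by
    apply hgA.frequently_zero_iff_eventually_zero.1
    have h1 : ∀ᶠ x in 𝓝[>] (0 : ℝ), g x = 0 := by
      filter_upwards [Ioo_mem_nhdsGT_of_mem (by simp [hδ] : (0:ℝ) ∈ Ico 0 δ)] with x hx
      exact hgIoo x hx
    exact h1.frequently.filter_mono (nhdsWithin_mono 0 (fun x hx => ne_of_gt hx))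
  -- derivative computations
  have hg1 : ∀ᶠ x in 𝓝 (0 : ℝ), deriv g x = g1 x := by
    filter_upwards [hUo.mem_nhds hU0] with x hx
    have hd0 : HasDerivAt Φ (deriv Φ x) x := ((hUa x hx).differentiableAt).hasDerivAt
    have hd1 : HasDerivAt (deriv Φ) (deriv (deriv Φ) x) x :=
      ((hD1 x hx).differentiableAt).hasDerivAt
    have hd2 : HasDerivAt (deriv (deriv Φ)) (deriv (deriv (deriv Φ)) x) x :=
      ((hD2 x hx).differentiableAt).hasDerivAt
    have t1 := (hasDerivAt_id x).mul hd2
    have t2 := hd1.const_mul (2 * ε)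
    have t3 : HasDerivAt (fun x => 2 * E * x - ω ^ 2 * x ^ 3 - 2 * s * α * e x)
        (2 * E - ω ^ 2 * (3 * x ^ 2) - 2 * s * α * (-s / lam * e x)) x := by
      have := (((hasDerivAt_id x).const_mul (2 * E)).sub
        ((hasDerivAt_pow 3 x).const_mul (ω ^ 2))).sub ((hexp x).const_mul (2 * s * α))
      convert this using 1 <;> (try rfl) <;> (try funext y) <;> (try simp only [id_eq]) <;> push_cast <;> ring
    have t4 := t3.mul hd0
    have H : HasDerivAt g (g1 x) x := by
      have := (t1.add t2).add t4
      convert this using 1 <;> (try rfl) <;> (try funext y) <;> rw [hg1def] <;> (try simp only [id_eq]) <;> push_cast <;> ring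
    exact H.deriv
  have hg2 : ∀ᶠ x in 𝓝 (0 : ℝ), deriv g1 x = g2 x := by
    filter_upwards [hUo.mem_nhds hU0] with x hx
    have hd0 : HasDerivAt Φ (deriv Φ x) x := ((hUa x hx).differentiableAt).hasDerivAt
    have hd1 : HasDerivAt (deriv Φ) (deriv (deriv Φ) x) x :=
      ((hD1 x hx).differentiableAt).hasDerivAt
    have hd2 : HasDerivAt (deriv (deriv Φ)) (deriv (deriv (deriv Φ)) x) x :=
      ((hD2 x hx).differentiableAt).hasDerivAt
    have hd3 : HasDerivAt (deriv (deriv (deriv Φ))) (deriv (deriv (deriv (deriv Φ))) x) x :=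
      ((hD3 x hx).differentiableAt).hasDerivAt
    have t1 := hd2
    have t2 := (hasDerivAt_id x).mul hd3
    have t3 := hd2.const_mul (2 * ε)
    have t4a : HasDerivAt (fun x => 2 * E - 3 * ω ^ 2 * x ^ 2 + (s / lam) * 2 * s * α * e x)
        (-6 * ω ^ 2 * x + (s / lam) * 2 * s * α * (-s / lam * e x)) x := by
      have := ((hasDerivAt_const x (2 * E)).sub
        ((hasDerivAt_pow 2 x).const_mul (3 * ω ^ 2))).add ((hexp x).const_mul (s / lam * (2 * s * α)))
      convert this using 1 <;> (try rfl) <;> (try funext y) <;> (try simp only [id_eq, Pi.add_apply, Pi.sub_apply]) <;> push_cast <;> ring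
    have t4 := t4a.mul hd0
    have t5a : HasDerivAt (fun x => 2 * E * x - ω ^ 2 * x ^ 3 - 2 * s * α * e x)
        (2 * E - ω ^ 2 * (3 * x ^ 2) - 2 * s * α * (-s / lam * e x)) x := by
      have := (((hasDerivAt_id x).const_mul (2 * E)).sub
        ((hasDerivAt_pow 3 x).const_mul (ω ^ 2))).sub ((hexp x).const_mul (2 * s * α))
      convert this using 1 <;> (try rfl) <;> (try funext y) <;> (try simp only [id_eq]) <;> push_cast <;> ring
    have t5 := t5a.mul hd1
    have H : HasDerivAt g1 (g2 x) x := by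
      have := (((t1.add t2).add t3).add t4).add t5
      convert this using 1 <;> (try rfl) <;> (try funext y) <;> rw [hg2def] <;> (try simp only [id_eq]) <;> push_cast <;> ring
    exact H.deriv
  -- the three coefficient equations
  have heq' : g =ᶠ[𝓝 (0:ℝ)] fun _ => (0:ℝ) := heq
  have hg1' : deriv g =ᶠ[𝓝 (0:ℝ)] g1 := hg1
  have hg2' : deriv g1 =ᶠ[𝓝 (0:ℝ)] g2 := hg2
  have hg1eq : g1 =ᶠ[𝓝 (0:ℝ)] fun _ => (0:ℝ) := by
    have h := heq'.deriv
    simp only [deriv_const'] at h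
    exact hg1'.symm.trans h
  have hg2eq : g2 =ᶠ[𝓝 (0:ℝ)] fun _ => (0:ℝ) := by
    have h := hg1eq.deriv
    simp only [deriv_const'] at h
    exact hg2'.symm.trans h
  have E0 : g 0 = 0 := heq'.self_of_nhds
  have E1 : g1 0 = 0 := hg1eq.self_of_nhds
  have E2 : g2 0 = 0 := hg2eq.self_of_nhds
  have he0 : e 0 = 1 := by simp [he]
  simp only [hgdef] at E0
  simp only [hg1def] at E1
  simp only [hg2def] at E2
  simp only [he0] at E0 E1 E2
  have hε1 : (2 * ε + 1 : ℝ) ≠ 0 := fun h => hε' (by linarith)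
  have hε2 : (ε + 1 : ℝ) ≠ 0 := fun h => hε'' (by linarith)
  have h2e : (2 * ε + 2 : ℝ) ≠ 0 := fun h => hε'' (by linarith)
  have En0 : 2 * ε * deriv Φ 0 = 2 * s * α * Φ 0 := by linear_combination E0
  have En1 : (1 + 2 * ε) * deriv (deriv Φ) 0
      = 2 * s * α * deriv Φ 0 - (2 * E + 4 * α / lam) * Φ 0 := by
    linear_combination E1 - (2 * α / lam * Φ 0) * hs2
  have En2 : (2 + 2 * ε) * deriv (deriv (deriv Φ)) 0
      = 2 * s * α * deriv (deriv Φ) 0 - (4 * E + 8 * α / lam) * deriv Φ 0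
        + 4 * s * α / lam ^ 2 * Φ 0 := by
    linear_combination E2 + (-(4 * α / lam) * deriv Φ 0 + 2 * s * α / lam ^ 2 * Φ 0) * hs2
  have hd1 : deriv Φ 0 = s * α * Φ 0 / ε := by
    rw [eq_div_iff hε]; linear_combination En0 / 2
  have hd2 : deriv (deriv Φ) 0 = (4 * α ^ 2 / ε - 2 * E - 4 * α / lam) * Φ 0 / (2 * ε + 1) := by
    rw [eq_div_iff hε1]
    rw [hd1] at En1
    linear_combination En1 + (2 * α ^ 2 / ε * Φ 0) * hs2
  have hd3 : deriv (deriv (deriv Φ)) 0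
      = (2 * s * α * deriv (deriv Φ) 0 - (4 * E + 8 * α / lam) * deriv Φ 0
          + 4 * s * α / lam ^ 2 * Φ 0) / (2 * ε + 2) := by
    rw [eq_div_iff h2e]; linear_combination En2
  have hgoal : iteratedDeriv 3 Φ 0 = deriv (deriv (deriv Φ)) 0 := by
    simp [iteratedDeriv_succ, iteratedDeriv_zero]
  rw [hgoal, hd3, hd2, hd1]
  have hf3 : ((Nat.factorial 3 : ℕ) : ℝ) = 6 := by norm_num [Nat.factorial]
  rw [hf3]
  field_simp
  ring
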